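/- Fix n ∈ ℕ, constants c ≥ 0, m > 0, Ω > 0, a bounded measurable function g : [0, 2π) → [0, ∞) and a measurable function p : [0, 2π) → [0, 1]. Let (φ_i)_{i=1}^{n} be i.i.d. uniform on [0, 2π), let (h_i)_{i=1}^{n} be i.i.d. with the Gamma distribution of shape m and rate m/Ω, and let (U_i)_{i=1}^{n} be i.i.d. uniform on [0, 1], with the three families mutually independent; set I_i = 1{U_i ≤ p(φ_i)} and T = c − Σ_{i=1}^{n} g(φ_i)·h_i·I_i. Then for every s ≥ 0 with s·(sup g)·Ω/m < 1, the Laplace transform of T satisfies E[exp(−sT)] = e^{−sc} · ( (1/(2π)) ∫₀^{2π} [ 1 − p(φ) + p(φ)·(1 − s·g(φ)·Ω/m)^{−m} ] dφ )ⁿ. -/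

import Mathlib

open MeasureTheory ProbabilityTheory Real

open Set in
lemma gammaLap {a r t : ℝ} (ha : 0 < a) (hr : 0 < r) (htr : t < r) :
    ∫⁻ x, ENNReal.ofReal (Real.exp (t * x)) ∂(gammaMeasure a r)
      = ENNReal.ofReal ((1 - t / r) ^ (-a)) := by
  have hb : 0 < r - t := by linarith
  have hm : Measurable (gammaPDF a r) := (measurable_gammaPDFReal a r).ennreal_ofReal
  rw [gammaMeasure, lintegral_withDensity_eq_lintegral_mul _ hm (by fun_prop)]
  simp only [Pi.mul_apply]
  have hsplit : ∫⁻ x, gammaPDF a r x * ENNReal.ofReal (Real.exp (t * x))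
      = ∫⁻ x in Ici 0, gammaPDF a r x * ENNReal.ofReal (Real.exp (t * x)) := by
    rw [← lintegral_add_compl _ (measurableSet_Ici (a := (0:ℝ))), compl_Ici]
    have : ∫⁻ x in Iio (0:ℝ), gammaPDF a r x * ENNReal.ofReal (Real.exp (t * x)) = 0 := by
      rw [setLIntegral_congr_fun measurableSet_Iio
        (fun x (hx : x < 0) ↦ by rw [gammaPDF_of_neg hx, zero_mul])]
      simp
    rw [this, add_zero]
  rw [hsplit]
  have heq : ∀ x ∈ Ici (0:ℝ), gammaPDF a r x * ENNReal.ofReal (Real.exp (t * x))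
      = ENNReal.ofReal (r ^ a / Real.Gamma a * (x ^ (a - 1) * Real.exp (-((r - t) * x)))) := by
    intro x hx
    have hx' : (0:ℝ) ≤ x := hx
    have hnn : (0:ℝ) ≤ r ^ a / Real.Gamma a * x ^ (a - 1) * Real.exp (-(r * x)) := by
      have := Real.rpow_nonneg hx' (a - 1)
      have h0 : (0:ℝ) ≤ r ^ a / Real.Gamma a := by positivity
      positivity
    rw [gammaPDF_of_nonneg hx, ← ENNReal.ofReal_mul hnn]
    congr 1
    rw [mul_assoc, mul_assoc, ← Real.exp_add]
    ring_nf
  rw [setLIntegral_congr_fun measurableSet_Ici heq]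
  rw [← ofReal_integral_eq_lintegral_ofReal]
  · rw [integral_Ici_eq_integral_Ioi, integral_const_mul,
      integral_rpow_mul_exp_neg_mul_Ioi ha hb]
    congr 1
    have h1 : (1 : ℝ) - t / r = (r - t) / r := by field_simp
    have hΓ : Real.Gamma a ≠ 0 := (Real.Gamma_pos_of_pos ha).ne'
    have hrt : ((r - t):ℝ) ^ a ≠ 0 := by positivity
    have hra : (r:ℝ) ^ a ≠ 0 := by positivity
    rw [h1, Real.div_rpow hb.le hr.le, Real.rpow_neg hb.le, Real.rpow_neg hr.le,
      one_div, Real.inv_rpow hb.le]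
    field_simp
  · have hint : IntegrableOn (fun x => x ^ (a - 1) * Real.exp (-((r - t) * x))) (Ici 0) := by
      rw [integrableOn_Ici_iff_integrableOn_Ioi]
      have := integrableOn_rpow_mul_exp_neg_mul_rpow (p := 1) (s := a - 1) (b := r - t)
        (by linarith) zero_lt_one hb
      have h2 : ∀ x:ℝ, -((r - t) * x) = -(r-t) * x ^ (1:ℝ) := by
        intro x; rw [Real.rpow_one]; ring
      simp only [h2]
      exact this
    exact hint.const_mul _
  · refine (ae_restrict_iff' measurableSet_Ici).mpr (ae_of_all _ fun x hx => ?_)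
    have hx' : (0:ℝ) ≤ x := hx
    have := Real.rpow_nonneg hx' (a - 1)
    have h0 : (0:ℝ) ≤ r ^ a / Real.Gamma a := by positivity
    positivity

open Set in
lemma unifLap {q e : ℝ} (hq : q ∈ Icc (0:ℝ) 1) (he : 0 ≤ e) :
    ∫⁻ u in Icc (0:ℝ) 1, ENNReal.ofReal (if u ≤ q then e else 1)
      = ENNReal.ofReal (e * q) + ENNReal.ofReal (1 - q) := by
  rw [← Icc_union_Ioc_eq_Icc hq.1 hq.2,
    lintegral_union measurableSet_Ioc ((Iic_disjoint_Ioc le_rfl).mono Icc_subset_Iic_self le_rfl)]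
  have h1 : ∫⁻ u in Icc (0:ℝ) q, ENNReal.ofReal (if u ≤ q then e else 1)
      = ENNReal.ofReal (e * q) := by
    rw [setLIntegral_congr_fun measurableSet_Icc
      (fun u hu => by rw [if_pos hu.2])]
    rw [setLIntegral_const, Real.volume_Icc, sub_zero,
      ← ENNReal.ofReal_mul he]
  have h2 : ∫⁻ u in Ioc q 1, ENNReal.ofReal (if u ≤ q then e else 1)
      = ENNReal.ofReal (1 - q) := by
    rw [setLIntegral_congr_fun measurableSet_Ioc
      (fun u hu => by rw [if_neg (not_le.mpr hu.1)])]
    rw [setLIntegral_const, Real.volume_Ioc, ENNReal.ofReal_one, one_mul]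
  rw [h1, h2]

open Set in
lemma oneFactorInt (m Ω s : ℝ) (hm : 0 < m) (hΩ : 0 < Ω)
    (g p : ℝ → ℝ) (hg : Measurable g) (hgnonneg : ∀ x, 0 ≤ g x)
    (G : ℝ) (hgbdd : ∀ x, g x ≤ G)
    (hp : Measurable p) (hp01 : ∀ x, p x ∈ Set.Icc (0 : ℝ) 1)
    (hs : 0 ≤ s) (hsG : s * G * Ω / m < 1) :
    ∫ x : ℝ × ℝ × ℝ, Real.exp (s * (g x.1 * x.2.1 * (if x.2.2 ≤ p x.1 then 1 else 0)))
      ∂(((volume (Ico (0:ℝ) (2*π)))⁻¹ • volume.restrict (Ico 0 (2*π))).prod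
         ((gammaMeasure m (m/Ω)).prod (volume.restrict (Icc (0:ℝ) 1))))
    = (1/(2*π)) * ∫ φ in Ico (0:ℝ) (2*π),
        (1 - p φ + p φ * (1 - s * g φ * Ω / m) ^ (-m)) := by
  have hπ : (0:ℝ) < 2 * π := by positivity
  have hr : (0:ℝ) < m / Ω := by positivity
  have hG0 : (0:ℝ) ≤ G := le_trans (hgnonneg 0) (hgbdd 0)
  have hgood : ∀ φ, s * g φ * Ω / m ≤ s * G * Ω / m := by
    intro φ
    have : s * g φ ≤ s * G := mul_le_mul_of_nonneg_left (hgbdd φ) hs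
    have h2 : s * g φ * Ω ≤ s * G * Ω := mul_le_mul_of_nonneg_right this hΩ.le
    gcongr
  have hbasepos : ∀ φ, (0:ℝ) < 1 - s * g φ * Ω / m := fun φ => by
    have := hgood φ; linarith
  have htlt : ∀ φ, s * g φ < m / Ω := by
    intro φ
    have h1 : s * g φ * Ω / m < 1 := lt_of_le_of_lt (hgood φ) hsG
    have h2 : s * g φ * Ω < m := by
      have := (div_lt_one hm).mp h1; linarith
    calc s * g φ = s * g φ * Ω / Ω := by field_simp
    _ < m / Ω := by gcongr
  have hA : ∀ φ, (0:ℝ) ≤ (1 - s * g φ * Ω / m) ^ (-m) :=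
    fun φ => Real.rpow_nonneg (hbasepos φ).le _
  set K : ℝ := (1 - s * G * Ω / m) ^ (-m) with hK
  have hAK : ∀ φ, (1 - s * g φ * Ω / m) ^ (-m) ≤ K := by
    intro φ
    exact Real.rpow_le_rpow_of_nonpos (by linarith [hsG]) (by linarith [hgood φ])
      (by linarith [hm.le] : -m ≤ 0)
  set W : ℝ → ℝ := fun φ => 1 - p φ + p φ * (1 - s * g φ * Ω / m) ^ (-m) with hW
  have hWmeas : Measurable W := by fun_prop
  have hprobH : IsProbabilityMeasure (gammaMeasure m (m/Ω)) := isProbabilityMeasure_gammaMeasure hm hr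
  have hq0 : ∀ φ, (0:ℝ) ≤ p φ := fun φ => (hp01 φ).1
  have hq1 : ∀ φ, p φ ≤ 1 := fun φ => (hp01 φ).2
  have hW0 : ∀ φ, 0 ≤ W φ := by
    intro φ
    have := mul_nonneg (hq0 φ) (hA φ)
    have := hq1 φ
    simp only [hW]; linarith
  have hWle : ∀ φ, W φ ≤ 1 + K := by
    intro φ
    have h1 : p φ * (1 - s * g φ * Ω / m) ^ (-m) ≤ 1 * K :=
      mul_le_mul (hq1 φ) (hAK φ) (hA φ) zero_le_one
    have := hq0 φ
    simp only [hW]; linarith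
  have hFmeas : Measurable (fun x : ℝ × ℝ × ℝ =>
      Real.exp (s * (g x.1 * x.2.1 * (if x.2.2 ≤ p x.1 then 1 else 0)))) := by
    apply Measurable.exp
    apply Measurable.const_mul
    apply Measurable.mul
    · exact (hg.comp measurable_fst).mul (measurable_fst.comp measurable_snd)
    · exact Measurable.ite (measurableSet_le (measurable_snd.comp measurable_snd)
        (hp.comp measurable_fst)) measurable_const measurable_const
  have hprobΦ : IsProbabilityMeasure
      ((volume (Ico (0:ℝ) (2*π)))⁻¹ • volume.restrict (Ico 0 (2*π))) := by
    constructor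
    rw [Measure.smul_apply, Measure.restrict_apply MeasurableSet.univ, Set.univ_inter,
      smul_eq_mul]
    exact ENNReal.inv_mul_cancel (by simp [Real.volume_Ico, hπ, Real.pi_pos]) (by simp [Real.volume_Ico, ENNReal.mul_eq_top])
  -- Step A : Bochner to lintegral
  rw [integral_eq_lintegral_of_nonneg_ae (ae_of_all _ fun x => Real.exp_nonneg _)
    hFmeas.aestronglyMeasurable]
  -- Step B : Fubini
  rw [lintegral_prod _ (hFmeas.ennreal_ofReal.aemeasurable)]
  -- Step C : inner integral
  have hinner : ∀ φ, (∫⁻ yz, ENNReal.ofReal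
      (Real.exp (s * (g φ * yz.1 * (if yz.2 ≤ p φ then 1 else 0))))
      ∂((gammaMeasure m (m/Ω)).prod (volume.restrict (Icc (0:ℝ) 1))))
      = ENNReal.ofReal (W φ) := by
    intro φ
    have hmyz : Measurable fun yz : ℝ × ℝ => ENNReal.ofReal
        (Real.exp (s * (g φ * yz.1 * (if yz.2 ≤ p φ then 1 else 0)))) := by
      apply Measurable.ennreal_ofReal
      apply Measurable.exp
      apply Measurable.const_mul
      exact ((measurable_const.mul measurable_fst)).mul
        (Measurable.ite (measurableSet_le measurable_snd measurable_const)
          measurable_const measurable_const)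
    rw [lintegral_prod _ hmyz.aemeasurable]
    have hstep1 : ∀ h : ℝ, (∫⁻ u in Icc (0:ℝ) 1, ENNReal.ofReal
        (Real.exp (s * (g φ * h * (if u ≤ p φ then 1 else 0)))))
        = ENNReal.ofReal (Real.exp (s * (g φ * h))) * ENNReal.ofReal (p φ)
          + ENNReal.ofReal (1 - p φ) := by
      intro h
      have hee : (fun u : ℝ => ENNReal.ofReal
          (Real.exp (s * (g φ * h * (if u ≤ p φ then 1 else 0)))))
          = fun u : ℝ => ENNReal.ofReal (if u ≤ p φ then Real.exp (s * (g φ * h)) else 1) := by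
        funext u; split_ifs <;> simp
      rw [hee, unifLap (hp01 φ) (Real.exp_nonneg _),
        ENNReal.ofReal_mul (Real.exp_nonneg _)]
    simp_rw [hstep1]
    rw [lintegral_add_right _ measurable_const, lintegral_const, measure_univ, mul_one,
      lintegral_mul_const _ (by fun_prop)]
    have hassoc : ∀ h : ℝ, s * (g φ * h) = (s * g φ) * h := fun h => by ring
    simp_rw [hassoc]
    rw [gammaLap hm hr (htlt φ)]
    have hdd : s * g φ / (m / Ω) = s * g φ * Ω / m := div_div_eq_mul_div _ _ _
    rw [hdd, ← ENNReal.ofReal_mul (hA φ),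
      ← ENNReal.ofReal_add (mul_nonneg (hA φ) (hq0 φ)) (by linarith [hq1 φ])]
    congr 1
    simp only [hW]; ring
  simp_rw [hinner]
  -- Step D : outer integral
  rw [lintegral_smul_measure]
  have hWint : IntegrableOn W (Ico (0:ℝ) (2*π)) := by
    apply Measure.integrableOn_of_bounded (M := 1 + K) measure_Ico_lt_top.ne
      hWmeas.aestronglyMeasurable
    refine ae_of_all _ fun φ => ?_
    rw [Real.norm_eq_abs, abs_of_nonneg (hW0 φ)]
    exact hWle φ
  rw [← ofReal_integral_eq_lintegral_ofReal hWint (ae_of_all _ hW0)]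
  rw [Real.volume_Ico, sub_zero, smul_eq_mul, ENNReal.toReal_mul, ENNReal.toReal_inv,
    ENNReal.toReal_ofReal hπ.le, ENNReal.toReal_ofReal (integral_nonneg hW0), one_div]

/-- Laplace transform of `T = c − Σᵢ g(φᵢ)·hᵢ·Iᵢ` (Lemma 5 of the paper): with
`φᵢ` i.i.d. uniform on `[0, 2π)`, `hᵢ` i.i.d. Gamma of shape `m` and rate `m/Ω`,
`Uᵢ` i.i.d. uniform on `[0, 1]`, all `3n` variables mutually independent, and
`Iᵢ = 1{Uᵢ ≤ p(φᵢ)}`, for every `s ≥ 0` with `s·(sup g)·Ω/m < 1` one has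
`E[e^{−sT}] = e^{−sc}·((1/2π)∫₀^{2π}[1 − p(φ) + p(φ)(1 − s g(φ) Ω/m)^{−m}]dφ)ⁿ`. -/
theorem laplace_transform_aggregate_ris_power
    {Ω' : Type*} [MeasureSpace Ω'] [IsProbabilityMeasure (ℙ : Measure Ω')]
    (n : ℕ) (c m Ω : ℝ) (hc : 0 ≤ c) (hm : 0 < m) (hΩ : 0 < Ω)
    (g p : ℝ → ℝ) (hg : Measurable g) (hgnonneg : ∀ x, 0 ≤ g x)
    (G : ℝ) (hgbdd : ∀ x, g x ≤ G)
    (hp : Measurable p) (hp01 : ∀ x, p x ∈ Set.Icc (0 : ℝ) 1)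
    (Φ H U : Fin n → Ω' → ℝ)
    (hΦmeas : ∀ i, Measurable (Φ i)) (hHmeas : ∀ i, Measurable (H i))
    (hUmeas : ∀ i, Measurable (U i))
    (hindep : iIndepFun
      (fun j : Fin 3 × Fin n => ![Φ, H, U] j.1 j.2) ℙ)
    (hΦlaw : ∀ i, Measure.map (Φ i) ℙ =
      (volume (Set.Ico (0 : ℝ) (2 * π)))⁻¹ • volume.restrict (Set.Ico 0 (2 * π)))
    (hHlaw : ∀ i, Measure.map (H i) ℙ = gammaMeasure m (m / Ω))
    (hUlaw : ∀ i, Measure.map (U i) ℙ = volume.restrict (Set.Icc (0 : ℝ) 1))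
    (T : Ω' → ℝ)
    (hT : ∀ ω, T ω = c - ∑ i, g (Φ i ω) * H i ω *
      (if U i ω ≤ p (Φ i ω) then 1 else 0))
    (s : ℝ) (hs : 0 ≤ s) (hsG : s * G * Ω / m < 1) :
    ∫ ω, Real.exp (-(s * T ω)) ∂ℙ =
      Real.exp (-(s * c)) *
        ((1 / (2 * π)) * ∫ φ in Set.Ico (0 : ℝ) (2 * π),
          (1 - p φ + p φ * (1 - s * g φ * Ω / m) ^ (-m))) ^ n := by

  classical
  set f : Fin 3 × Fin n → Ω' → ℝ := fun j => ![Φ, H, U] j.1 j.2 with hf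
  have hfmeas : ∀ j, Measurable (f j) := by
    rintro ⟨k, i⟩
    fin_cases k
    · exact hΦmeas i
    · exact hHmeas i
    · exact hUmeas i
  set X : Fin n → Ω' → ℝ := fun i ω =>
    g (Φ i ω) * H i ω * (if U i ω ≤ p (Φ i ω) then 1 else 0) with hX
  have hXmeas : ∀ i, Measurable (X i) := fun i =>
    ((hg.comp (hΦmeas i)).mul (hHmeas i)).mul
      (Measurable.ite (measurableSet_le (hUmeas i) (hp.comp (hΦmeas i)))
        measurable_const measurable_const)
  -- Step 1 : split off the constant
  have step1 : ∫ ω, Real.exp (-(s * T ω)) ∂ℙ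
      = Real.exp (-(s * c)) * ∫ ω, Real.exp (s * ∑ i, X i ω) ∂ℙ := by
    rw [← integral_const_mul]
    congr 1
    funext ω
    rw [hT ω, ← Real.exp_add]
    congr 1
    ring
  rw [step1]
  congr 1
  -- Step 2 : grouping independence
  have hgroup : ∀ (s' : Finset (Fin n)) (i : Fin n), i ∉ s' →
      IndepFun (X i) (fun ω => ∑ j ∈ s', X j ω) ℙ := by
    intro s' i hi
    set S₁ : Finset (Fin 3 × Fin n) := Finset.univ ×ˢ {i} with hS₁
    set T₁ : Finset (Fin 3 × Fin n) := Finset.univ ×ˢ s' with hT₁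
    have hdisj : Disjoint S₁ T₁ := by
      rw [Finset.disjoint_left]
      rintro ⟨k, j⟩ hS hT
      rw [hS₁, Finset.mem_product, Finset.mem_singleton] at hS
      rw [hT₁, Finset.mem_product] at hT
      exact hi (hS.2 ▸ hT.2)
    have hbase := hindep.indepFun_finset S₁ T₁ hdisj hfmeas
    have m0 : ((0 : Fin 3), i) ∈ S₁ :=
      Finset.mem_product.mpr ⟨Finset.mem_univ _, Finset.mem_singleton_self i⟩
    have m1 : ((1 : Fin 3), i) ∈ S₁ :=
      Finset.mem_product.mpr ⟨Finset.mem_univ _, Finset.mem_singleton_self i⟩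
    have m2 : ((2 : Fin 3), i) ∈ S₁ :=
      Finset.mem_product.mpr ⟨Finset.mem_univ _, Finset.mem_singleton_self i⟩
    have memT : ∀ (k : Fin 3) (j : {x // x ∈ s'}), (k, j.1) ∈ T₁ :=
      fun k j => Finset.mem_product.mpr ⟨Finset.mem_univ _, j.2⟩
    set φmap : ({x // x ∈ S₁} → ℝ) → ℝ := fun v =>
      g (v ⟨((0 : Fin 3), i), m0⟩) * v ⟨((1 : Fin 3), i), m1⟩ *
        (if v ⟨((2 : Fin 3), i), m2⟩ ≤ p (v ⟨((0 : Fin 3), i), m0⟩) then 1 else 0) with hφm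
    set ψmap : ({x // x ∈ T₁} → ℝ) → ℝ := fun v =>
      ∑ j ∈ s'.attach, g (v ⟨((0 : Fin 3), j.1), memT 0 j⟩) * v ⟨((1 : Fin 3), j.1), memT 1 j⟩ *
        (if v ⟨((2 : Fin 3), j.1), memT 2 j⟩ ≤ p (v ⟨((0 : Fin 3), j.1), memT 0 j⟩)
          then 1 else 0) with hψm
    have hφmeas : Measurable φmap :=
      ((hg.comp (measurable_pi_apply _)).mul (measurable_pi_apply _)).mul
        (Measurable.ite (measurableSet_le (measurable_pi_apply _)
          (hp.comp (measurable_pi_apply _))) measurable_const measurable_const)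
    have hψmeas : Measurable ψmap := by
      apply Finset.measurable_sum
      intro j _
      exact ((hg.comp (measurable_pi_apply _)).mul (measurable_pi_apply _)).mul
        (Measurable.ite (measurableSet_le (measurable_pi_apply _)
          (hp.comp (measurable_pi_apply _))) measurable_const measurable_const)
    have hcomp := hbase.comp hφmeas hψmeas
    have e1 : (φmap ∘ fun a (j : {x // x ∈ S₁}) => f j.1 a) = X i := by
      funext ω
      simp only [hφm, Function.comp_apply, hX, hf]
      simp [Matrix.cons_val_zero, Matrix.cons_val_one, Matrix.head_cons]
    have e2 : (ψmap ∘ fun a (j : {x // x ∈ T₁}) => f j.1 a)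
        = fun ω => ∑ j ∈ s', X j ω := by
      funext ω
      simp only [hψm, Function.comp_apply, hX, hf, Matrix.cons_val_zero, Matrix.cons_val_one,
        Matrix.head_cons, Matrix.cons_val_two, Matrix.tail_cons]
      rw [← Finset.sum_attach s' (fun j => g (Φ j ω) * H j ω *
        (if U j ω ≤ p (Φ j ω) then 1 else 0))]
    rw [e1, e2] at hcomp
    exact hcomp
  -- Step 3 : mgf factorization
  have hfact : ∀ s' : Finset (Fin n),
      mgf (fun ω => ∑ j ∈ s', X j ω) ℙ s = ∏ j ∈ s', mgf (X j) ℙ s := by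
    intro s'
    induction s' using Finset.induction_on with
    | empty => simp [mgf]
    | @insert i s' hi ih =>
      have hIF := hgroup s' i hi
      have e3 : (fun ω => ∑ j ∈ insert i s', X j ω)
          = X i + fun ω => ∑ j ∈ s', X j ω := by
        funext ω
        rw [Finset.sum_insert hi]
        rfl
      rw [e3, hIF.mgf_add ((hXmeas i).const_mul s).exp.aestronglyMeasurable
        (((Finset.measurable_sum s' fun j _ => hXmeas j).const_mul s).exp.aestronglyMeasurable),
        Finset.prod_insert hi, ih]
  -- Step 4 : per-factor mgf
  have hsingle : ∀ i, mgf (X i) ℙ s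
      = (1/(2*π)) * ∫ φ in Set.Ico (0:ℝ) (2*π),
          (1 - p φ + p φ * (1 - s * g φ * Ω / m) ^ (-m)) := by
    intro i
    have hHU : IndepFun (H i) (U i) ℙ := by
      have h := hindep.indepFun (i := ((1 : Fin 3), i)) (j := ((2 : Fin 3), i)) (by simp)
      simpa [hf, Matrix.cons_val_one, Matrix.head_cons] using h
    have hpair : IndepFun (fun ω => (H i ω, U i ω)) (Φ i) ℙ := by
      have h := hindep.indepFun_prodMk hfmeas ((1 : Fin 3), i) ((2 : Fin 3), i)
        ((0 : Fin 3), i) (by simp) (by simp)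
      simpa [hf, Matrix.cons_val_zero, Matrix.cons_val_one, Matrix.head_cons] using h
    have hHUmeas : Measurable (fun ω => (H i ω, U i ω)) := (hHmeas i).prodMk (hUmeas i)
    have hmap2 : Measure.map (fun ω => (H i ω, U i ω)) ℙ
        = (Measure.map (H i) ℙ).prod (Measure.map (U i) ℙ) :=
      (indepFun_iff_map_prod_eq_prod_map_map (hHmeas i).aemeasurable
        (hUmeas i).aemeasurable).mp hHU
    have hmap1 : Measure.map (fun ω => (Φ i ω, (H i ω, U i ω))) ℙ
        = (Measure.map (Φ i) ℙ).prod (Measure.map (fun ω => (H i ω, U i ω)) ℙ) :=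
      (indepFun_iff_map_prod_eq_prod_map_map (hΦmeas i).aemeasurable
        hHUmeas.aemeasurable).mp hpair.symm
    have hFmeas : Measurable (fun x : ℝ × ℝ × ℝ =>
        Real.exp (s * (g x.1 * x.2.1 * (if x.2.2 ≤ p x.1 then 1 else 0)))) := by
      apply Measurable.exp
      apply Measurable.const_mul
      exact ((hg.comp measurable_fst).mul (measurable_fst.comp measurable_snd)).mul
        (Measurable.ite (measurableSet_le (measurable_snd.comp measurable_snd)
          (hp.comp measurable_fst)) measurable_const measurable_const)
    have hV : Measurable (fun ω => (Φ i ω, (H i ω, U i ω))) :=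
      (hΦmeas i).prodMk hHUmeas
    have e4 : mgf (X i) ℙ s = ∫ x : ℝ × ℝ × ℝ,
        Real.exp (s * (g x.1 * x.2.1 * (if x.2.2 ≤ p x.1 then 1 else 0)))
        ∂(Measure.map (fun ω => (Φ i ω, (H i ω, U i ω))) ℙ) := by
      rw [integral_map hV.aemeasurable hFmeas.aestronglyMeasurable]
      rfl
    rw [e4, hmap1, hmap2, hΦlaw i, hHlaw i, hUlaw i]
    exact oneFactorInt m Ω s hm hΩ g p hg hgnonneg G hgbdd hp hp01 hs hsG
  -- Put it together
  have e5 : (∫ ω, Real.exp (s * ∑ i, X i ω) ∂ℙ)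
      = mgf (fun ω => ∑ j ∈ Finset.univ, X j ω) ℙ s := rfl
  rw [e5, hfact, Finset.prod_congr rfl (fun i _ => hsingle i), Finset.prod_const,
    Finset.card_univ, Fintype.card_fin]
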